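/- Let G be a finite simple graph with maximum degree Δ and let v be a vertex of G of degree deg(v). Then b^I_g(G) ≤ b^A_g(G − v) + 2Δ + deg(v), and b^A_g(G) ≥ b^I_g(G − v) − 2Δ − deg(v), where G − v is the graph obtained from G by deleting the vertex v and all edges incident to it. -/

import Mathlib

open SimpleGraph

/-- The balance score of a state `(S0, S1)` in a graph `G`: the number of edges of `G` with
one endpoint in `S0` and the other in `S1`, minus the number of edges with both endpoints
in `S0` or both endpoints in `S1`. -/
noncomputable def bscore {V : Type*} (G : SimpleGraph V) (S0 S1 : Set V) : ℤ :=
  ({e ∈ G.edgeSet | ∃ u ∈ S0, ∃ v ∈ S1, e = s(u, v)}.ncard : ℤ) -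
  ({e ∈ G.edgeSet | (∃ u ∈ S0, ∃ v ∈ S0, e = s(u, v)) ∨
      (∃ u ∈ S1, ∃ v ∈ S1, e = s(u, v))}.ncard : ℤ)

/-- The value of the balance game computed by backward induction, with `k` moves remaining.
`t = true` means it is Admirable's (the minimizer's) turn, `t = false` means it is
Impish's (the maximizer's) turn.  `S0` is the set of vertices selected by Admirable so far,
`S1` the set selected by Impish. -/
noncomputable def gameVal {V : Type*} [Fintype V] (G : SimpleGraph V) :
    ℕ → Bool → Finset V → Finset V → ℤ
  | 0, _, S0, S1 => bscore G ↑S0 ↑S1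
  | (k + 1), t, S0, S1 =>
    letI := Classical.decEq V
    if h : (Finset.univ \ (S0 ∪ S1)).Nonempty then
      if t then (Finset.univ \ (S0 ∪ S1)).inf' h fun v => gameVal G k false (insert v S0) S1
      else (Finset.univ \ (S0 ∪ S1)).sup' h fun v => gameVal G k true S0 (insert v S1)
    else bscore G ↑S0 ↑S1

/-- The (A)-start game balance number `b^A_g(G)`. -/
noncomputable def balA {V : Type*} [Fintype V] (G : SimpleGraph V) : ℤ :=
  gameVal G (Fintype.card V) true ∅ ∅

/-- The (I)-start game balance number `b^I_g(G)`. -/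
noncomputable def balI {V : Type*} [Fintype V] (G : SimpleGraph V) : ℤ :=
  gameVal G (Fintype.card V) false ∅ ∅

/-- The value of the cordiality game computed by backward induction (final score is
`|bscore|`), with `k` moves remaining; `t = true` means it is Admirable's turn. -/
noncomputable def cordVal {V : Type*} [Fintype V] (G : SimpleGraph V) :
    ℕ → Bool → Finset V → Finset V → ℤ
  | 0, _, S0, S1 => |bscore G ↑S0 ↑S1|
  | (k + 1), t, S0, S1 =>
    letI := Classical.decEq V
    if h : (Finset.univ \ (S0 ∪ S1)).Nonempty then
      if t then (Finset.univ \ (S0 ∪ S1)).inf' h fun v => cordVal G k false (insert v S0) S1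
      else (Finset.univ \ (S0 ∪ S1)).sup' h fun v => cordVal G k true S0 (insert v S1)
    else |bscore G ↑S0 ↑S1|

/-- The (A)-start game cordiality number `c^A_g(G)`. -/
noncomputable def cordA {V : Type*} [Fintype V] (G : SimpleGraph V) : ℤ :=
  cordVal G (Fintype.card V) true ∅ ∅

/-- The (I)-start game cordiality number `c^I_g(G)`. -/
noncomputable def cordI {V : Type*} [Fintype V] (G : SimpleGraph V) : ℤ :=
  cordVal G (Fintype.card V) false ∅ ∅


set_option linter.unusedSectionVars false
set_option maxHeartbeats 1000000

namespace BalAux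

section Abstract
variable {V : Type*} [Fintype V]

noncomputable def gGame (f : Finset V → Finset V → ℤ) (X : Finset V) :
    ℕ → Bool → Finset V → Finset V → ℤ
  | 0, _, S0, S1 => f S0 S1
  | (k + 1), t, S0, S1 =>
    letI := Classical.decEq V
    if h : (X \ (S0 ∪ S1)).Nonempty then
      if t then (X \ (S0 ∪ S1)).inf' h fun u => gGame f X k false (insert u S0) S1
      else (X \ (S0 ∪ S1)).sup' h fun u => gGame f X k true S0 (insert u S1)
    else f S0 S1

lemma gGame_succ [inst : DecidableEq V] (f : Finset V → Finset V → ℤ) (X : Finset V)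
    (k : ℕ) (t : Bool) (S0 S1 : Finset V) :
    gGame f X (k + 1) t S0 S1 =
      if h : (X \ (S0 ∪ S1)).Nonempty then
        if t then (X \ (S0 ∪ S1)).inf' h fun u => gGame f X k false (insert u S0) S1
        else (X \ (S0 ∪ S1)).sup' h fun u => gGame f X k true S0 (insert u S1)
      else f S0 S1 := by
  have h : inst = Classical.decEq V := Subsingleton.elim _ _
  subst h
  rfl


variable [DecidableEq V]

lemma lemE (f : Finset V → Finset V → ℤ) (v : V) (c : ℤ) :
    ∀ (k : ℕ) (t : Bool) (S0 S1 T0 T1 : Finset V),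
      (Finset.univ \ (S0 ∪ S1) = Finset.univ.erase v \ (T0 ∪ T1)) →
      (∀ U0 U1 : Finset V, |f (S0 ∪ U0) (S1 ∪ U1) - f (T0 ∪ U0) (T1 ∪ U1)| ≤ c) →
      gGame f Finset.univ k t S0 S1 ≤ gGame f (Finset.univ.erase v) k t T0 T1 + c := by
  intro k
  induction k with
  | zero =>
    intro t S0 S1 T0 T1 _ hsc
    have := (abs_le.mp (by simpa only [Finset.union_empty] using hsc ∅ ∅)).2
    show f S0 S1 ≤ f T0 T1 + c
    linarith
  | succ k ih =>
    intro t S0 S1 T0 T1 hfr hsc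
    rw [gGame_succ, gGame_succ, hfr]
    by_cases hne : (Finset.univ.erase v \ (T0 ∪ T1)).Nonempty
    · rw [dif_pos hne, dif_pos hne]
      cases t with
      | true =>
        simp only [if_true]
        obtain ⟨u, hu, heq⟩ := Finset.exists_mem_eq_inf' hne
          (fun u => gGame f (Finset.univ.erase v) k false (insert u T0) T1)
        rw [heq]
        refine le_trans (Finset.inf'_le _ hu) ?_
        apply ih
        · have h1 : Finset.univ \ (insert u S0 ∪ S1) = (Finset.univ \ (S0 ∪ S1)).erase u := by
            rw [Finset.insert_union, Finset.sdiff_insert]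
          have h2 : Finset.univ.erase v \ (insert u T0 ∪ T1) =
              (Finset.univ.erase v \ (T0 ∪ T1)).erase u := by
            rw [Finset.insert_union, Finset.sdiff_insert]
          rw [h1, h2, hfr]
        · intro U0 U1
          have e1 : insert u S0 ∪ U0 = S0 ∪ insert u U0 := by
            rw [Finset.insert_union, Finset.union_insert]
          have e2 : insert u T0 ∪ U0 = T0 ∪ insert u U0 := by
            rw [Finset.insert_union, Finset.union_insert]
          rw [e1, e2]
          exact hsc (insert u U0) U1
      | false =>
        simp only [Bool.false_eq_true, if_false]
        apply Finset.sup'_le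
        intro u hu
        refine le_trans ?_ (add_le_add_left (Finset.le_sup'
          (fun u => gGame f (Finset.univ.erase v) k true T0 (insert u T1)) hu) c)
        apply ih
        · have h1 : Finset.univ \ (S0 ∪ insert u S1) = (Finset.univ \ (S0 ∪ S1)).erase u := by
            rw [Finset.union_insert, Finset.sdiff_insert]
          have h2 : Finset.univ.erase v \ (T0 ∪ insert u T1) =
              (Finset.univ.erase v \ (T0 ∪ T1)).erase u := by
            rw [Finset.union_insert, Finset.sdiff_insert]
          rw [h1, h2, hfr]
        · intro U0 U1
          have e1 : insert u S1 ∪ U1 = S1 ∪ insert u U1 := by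
            rw [Finset.insert_union, Finset.union_insert]
          have e2 : insert u T1 ∪ U1 = T1 ∪ insert u U1 := by
            rw [Finset.insert_union, Finset.union_insert]
          rw [e1, e2]
          exact hsc U0 (insert u U1)
    · rw [dif_neg hne, dif_neg hne]
      have := (abs_le.mp (by simpa only [Finset.union_empty] using hsc ∅ ∅)).2
      linarith

section P
variable (f : Finset V → Finset V → ℤ) (v : V) (c1 c2 : ℤ)
variable (hc1 : 0 ≤ c1) (hc2 : 0 ≤ c2)
variable (Hv0 : ∀ S0 S1 : Finset V, |f (insert v S0) S1 - f S0 S1| ≤ c1)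
variable (Hv1 : ∀ S0 S1 : Finset V, |f S0 (insert v S1) - f S0 S1| ≤ c1)
variable (Hx0 : ∀ (x : V) (S0 S1 : Finset V), |f (insert x S0) S1 - f S0 S1| ≤ c2)
variable (Hx1 : ∀ (x : V) (S0 S1 : Finset V), |f S0 (insert x S1) - f S0 S1| ≤ c2)

include hc1 hc2 Hv0 Hv1 Hx0 Hx1

lemma lemP :
    ∀ (k : ℕ) (t : Bool) (S0 S1 : Finset V) (d : V),
      v ∉ S0 → v ∉ S1 → d ∉ S0 → d ∉ S1 → d ≠ v →
      gGame f Finset.univ k t S0 (insert d S1) ≤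
        gGame f (Finset.univ.erase v) k t S0 S1 + (2 * c2 + c1) := by
  intro k
  induction k with
  | zero =>
    intro t S0 S1 d _ _ _ _ _
    have := (abs_le.mp (Hx1 d S0 S1)).2
    show f S0 (insert d S1) ≤ f S0 S1 + (2 * c2 + c1)
    linarith
  | succ k ih =>
    intro t S0 S1 d hv0 hv1 hd0 hd1 hdv
    have hvF : v ∈ Finset.univ \ (S0 ∪ insert d S1) := by
      simp [hv0, hv1, Ne.symm hdv]
    have hdF : d ∈ Finset.univ.erase v \ (S0 ∪ S1) := by
      simp [hd0, hd1, hdv]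
    rw [gGame_succ, gGame_succ, dif_pos ⟨v, hvF⟩, dif_pos ⟨d, hdF⟩]
    cases t with
    | true =>
      simp only [if_true]
      obtain ⟨w, hw, heq⟩ := Finset.exists_mem_eq_inf' ⟨d, hdF⟩
        (fun u => gGame f (Finset.univ.erase v) k false (insert u S0) S1)
      rw [heq]
      by_cases hwd : w = d
      · subst hwd
        refine le_trans (Finset.inf'_le _ hvF) ?_
        apply lemE f v (2 * c2 + c1)
        · ext x
          simp only [Finset.mem_sdiff, Finset.mem_univ, true_and, Finset.mem_union,
            Finset.mem_insert, Finset.mem_erase]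
          tauto
        · intro U0 U1
          have e0 : insert v S0 ∪ U0 = insert v (S0 ∪ U0) := by rw [Finset.insert_union]
          have e1 : insert w S1 ∪ U1 = insert w (S1 ∪ U1) := by rw [Finset.insert_union]
          have e2 : insert w S0 ∪ U0 = insert w (S0 ∪ U0) := by rw [Finset.insert_union]
          rw [e0, e1, e2]
          set A := S0 ∪ U0
          set B := S1 ∪ U1
          have b1 := abs_le.mp (Hv0 A (insert w B))
          have b2 := abs_le.mp (Hx1 w A B)
          have b3 := abs_le.mp (Hx0 w A B)
          rw [abs_le]
          constructor <;> linarith [b1.1, b1.2, b2.1, b2.2, b3.1, b3.2]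
      · have hwF : w ∈ Finset.univ \ (S0 ∪ insert d S1) := by
          simp only [Finset.mem_sdiff, Finset.mem_univ, true_and, Finset.mem_union,
            Finset.mem_insert] at hw ⊢
          simp only [Finset.mem_erase] at hw
          tauto
        refine le_trans (Finset.inf'_le _ hwF) ?_
        apply ih false (insert w S0) S1 d
        · simp only [Finset.mem_insert]
          rintro (h | h)
          · exact absurd h.symm (by simp only [Finset.mem_sdiff, Finset.mem_erase] at hw; exact hw.1.1)
          · exact hv0 h
        · exact hv1
        · simp only [Finset.mem_insert]
          rintro (h | h)
          · exact hwd h.symm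
          · exact hd0 h
        · exact hd1
        · exact hdv
    | false =>
      simp only [Bool.false_eq_true, if_false]
      apply Finset.sup'_le
      intro u hu
      have hu' := hu
      simp only [Finset.mem_sdiff, Finset.mem_univ, true_and, Finset.mem_union,
        Finset.mem_insert, not_or] at hu'
      obtain ⟨hu0, hud, hu1⟩ := hu'
      by_cases huv : u = v
      · rw [huv]
        refine le_trans ?_ (add_le_add_left (Finset.le_sup'
          (fun u => gGame f (Finset.univ.erase v) k true S0 (insert u S1)) hdF) _)
        apply lemE f v (2 * c2 + c1)
        · ext x
          simp only [Finset.mem_sdiff, Finset.mem_univ, true_and, Finset.mem_union,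
            Finset.mem_insert, Finset.mem_erase]
          tauto
        · intro U0 U1
          have e1 : insert v (insert d S1) ∪ U1 = insert v ((insert d S1) ∪ U1) := by
            rw [Finset.insert_union]
          rw [e1]
          have := Hv1 (S0 ∪ U0) (insert d S1 ∪ U1)
          linarith [(abs_le.mp this).1, (abs_le.mp this).2, abs_nonneg (f (S0 ∪ U0) (insert v (insert d S1 ∪ U1)) - f (S0 ∪ U0) (insert d S1 ∪ U1)), this]
      · refine le_trans ?_ (add_le_add_left (Finset.le_sup'
          (fun w => gGame f (Finset.univ.erase v) k true S0 (insert w S1))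
          (show u ∈ Finset.univ.erase v \ (S0 ∪ S1) by simp [huv, hu0, hu1])) _)
        have hcomm : insert u (insert d S1) = insert d (insert u S1) := Finset.insert_comm u d S1
        rw [hcomm]
        apply ih true S0 (insert u S1) d hv0
        · simp only [Finset.mem_insert, not_or]
          exact ⟨fun h => huv h.symm, hv1⟩
        · exact hd0
        · simp only [Finset.mem_insert, not_or]
          exact ⟨fun h => hud h.symm, hd1⟩
        · exact hdv
end P

lemma lemMAIN (f : Finset V → Finset V → ℤ) (v : V) (c1 c2 : ℤ)
    (hc1 : 0 ≤ c1) (hc2 : 0 ≤ c2)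
    (Hv0 : ∀ S0 S1 : Finset V, |f (insert v S0) S1 - f S0 S1| ≤ c1)
    (Hv1 : ∀ S0 S1 : Finset V, |f S0 (insert v S1) - f S0 S1| ≤ c1)
    (Hx0 : ∀ (x : V) (S0 S1 : Finset V), |f (insert x S0) S1 - f S0 S1| ≤ c2)
    (Hx1 : ∀ (x : V) (S0 S1 : Finset V), |f S0 (insert x S1) - f S0 S1| ≤ c2)
    (m : ℕ) :
    gGame f Finset.univ (m + 1) false ∅ ∅ ≤
      gGame f (Finset.univ.erase v) m true ∅ ∅ + (2 * c2 + c1) := by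
  have hne : (Finset.univ \ ((∅ : Finset V) ∪ ∅)).Nonempty := by
    refine ⟨v, ?_⟩; simp
  rw [gGame_succ, dif_pos hne]
  simp only [Bool.false_eq_true, if_false]
  apply Finset.sup'_le
  intro u _
  by_cases huv : u = v
  · rw [huv]
    apply lemE f v (2 * c2 + c1)
    · ext x
      simp only [Finset.mem_sdiff, Finset.mem_univ, true_and, Finset.mem_union,
        Finset.mem_insert, Finset.mem_erase, Finset.notMem_empty]
      tauto
    · intro U0 U1
      have e1 : insert v (∅ : Finset V) ∪ U1 = insert v ((∅ : Finset V) ∪ U1) := by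
        rw [Finset.insert_union]
      rw [e1]
      have := Hv1 ((∅ : Finset V) ∪ U0) ((∅ : Finset V) ∪ U1)
      linarith [(abs_le.mp this).1, (abs_le.mp this).2]
  · exact lemP f v c1 c2 hc1 hc2 Hv0 Hv1 Hx0 Hx1 m true ∅ ∅ u
      (Finset.notMem_empty _) (Finset.notMem_empty _) (Finset.notMem_empty _)
      (Finset.notMem_empty _) huv

lemma inf'_neg_eq {α : Type*} [DecidableEq α] {s : Finset α} (h : s.Nonempty) (g : α → ℤ) :
    s.inf' h (fun x => -g x) = -s.sup' h g := by
  apply le_antisymm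
  · obtain ⟨i, hi, heq⟩ := Finset.exists_mem_eq_sup' h g
    rw [heq]
    exact Finset.inf'_le _ hi
  · apply Finset.le_inf'
    intro b hb
    simp only [neg_le_neg_iff]
    exact Finset.le_sup' g hb

lemma sup'_neg_eq {α : Type*} [DecidableEq α] {s : Finset α} (h : s.Nonempty) (g : α → ℤ) :
    s.sup' h (fun x => -g x) = -s.inf' h g := by
  have := inf'_neg_eq h (fun x => -g x)
  simp only [neg_neg] at this
  rw [this, neg_neg]


lemma lemDUAL (f : Finset V → Finset V → ℤ) (X : Finset V) :
    ∀ (k : ℕ) (t : Bool) (S0 S1 : Finset V),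
      gGame (fun A B => -f B A) X k t S0 S1 = -gGame f X k (!t) S1 S0 := by
  intro k
  induction k with
  | zero => intro t S0 S1; rfl
  | succ k ih =>
    intro t S0 S1
    rw [gGame_succ, gGame_succ]
    have hU : X \ (S1 ∪ S0) = X \ (S0 ∪ S1) := by rw [Finset.union_comm]
    rw [hU]
    by_cases hne : (X \ (S0 ∪ S1)).Nonempty
    · rw [dif_pos hne, dif_pos hne]
      cases t with
      | true =>
        simp only [if_true, Bool.not_true, Bool.false_eq_true, if_false]
        have : (fun u => gGame (fun A B => -f B A) X k false (insert u S0) S1) =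
            (fun u => -gGame f X k true S1 (insert u S0)) := by
          funext u; rw [ih]; rfl
        rw [this, inf'_neg_eq hne]
      | false =>
        simp only [Bool.false_eq_true, if_false, Bool.not_false, if_true]
        have : (fun u => gGame (fun A B => -f B A) X k true S0 (insert u S1)) =
            (fun u => -gGame f X k false (insert u S1) S0) := by
          funext u; rw [ih]; rfl
        rw [this, sup'_neg_eq hne]
    · rw [dif_neg hne, dif_neg hne]

lemma gameVal_succ [inst : DecidableEq V] (G : SimpleGraph V)
    (k : ℕ) (t : Bool) (S0 S1 : Finset V) :
    gameVal G (k + 1) t S0 S1 =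
      if h : (Finset.univ \ (S0 ∪ S1)).Nonempty then
        if t then (Finset.univ \ (S0 ∪ S1)).inf' h fun u => gameVal G k false (insert u S0) S1
        else (Finset.univ \ (S0 ∪ S1)).sup' h fun u => gameVal G k true S0 (insert u S1)
      else bscore G ↑S0 ↑S1 := by
  have h : inst = Classical.decEq V := Subsingleton.elim _ _
  subst h
  rfl

lemma gameVal_eq_gGame (G : SimpleGraph V) :
    ∀ (k : ℕ) (t : Bool) (S0 S1 : Finset V),
      gameVal G k t S0 S1 = gGame (fun A B => bscore G ↑A ↑B) Finset.univ k t S0 S1 := by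
  classical
  intro k
  induction k with
  | zero => intro t S0 S1; rfl
  | succ k ih =>
    intro t S0 S1
    rw [gameVal_succ, gGame_succ]
    by_cases hne : (Finset.univ \ (S0 ∪ S1)).Nonempty
    · rw [dif_pos hne, dif_pos hne]
      cases t with
      | true =>
        simp only [if_true]
        exact Finset.inf'_congr hne rfl (fun a _ => ih false (insert a S0) S1)
      | false =>
        simp only [Bool.false_eq_true, if_false]
        exact Finset.sup'_congr hne rfl (fun a _ => ih true S0 (insert a S1))
    · rw [dif_neg hne, dif_neg hne]

end Abstract

section Graph
variable {V : Type*} [Fintype V] [DecidableEq V] (G : SimpleGraph V) [DecidableRel G.Adj]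

lemma bscore_comm (s0 s1 : Set V) : bscore G s0 s1 = bscore G s1 s0 := by
  have h1 : {e ∈ G.edgeSet | ∃ u ∈ s0, ∃ w ∈ s1, e = s(u, w)} =
      {e ∈ G.edgeSet | ∃ u ∈ s1, ∃ w ∈ s0, e = s(u, w)} := by
    ext e
    simp only [Set.mem_setOf_eq]
    constructor
    · rintro ⟨he, u, hu, w, hw, rfl⟩
      exact ⟨he, w, hw, u, hu, Sym2.eq_swap⟩
    · rintro ⟨he, u, hu, w, hw, rfl⟩
      exact ⟨he, w, hw, u, hu, Sym2.eq_swap⟩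
  have h2 : {e ∈ G.edgeSet | (∃ u ∈ s0, ∃ w ∈ s0, e = s(u, w)) ∨
        (∃ u ∈ s1, ∃ w ∈ s1, e = s(u, w))} =
      {e ∈ G.edgeSet | (∃ u ∈ s1, ∃ w ∈ s1, e = s(u, w)) ∨
        (∃ u ∈ s0, ∃ w ∈ s0, e = s(u, w))} := by
    ext e
    simp only [Set.mem_setOf_eq]
    constructor <;> rintro ⟨he, h⟩ <;> exact ⟨he, h.symm⟩
  unfold bscore
  rw [h1, h2]

lemma ncard_incidence : (G.incidenceSet v).ncard = G.degree v := by
  have h1 : G.incidenceSet v = ↑(G.incidenceFinset v) := by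
    simp [incidenceFinset, Set.coe_toFinset]
  rw [h1, Set.ncard_coe_finset, card_incidenceFinset_eq_degree]

lemma bscore_insert_right (x : V) (s0 s1 : Set V) :
    |bscore G s0 (insert x s1) - bscore G s0 s1| ≤ (G.degree x : ℤ) := by
  classical
  set I := G.incidenceSet x with hI
  set C := {e ∈ G.edgeSet | ∃ u ∈ s0, ∃ w ∈ s1, e = s(u, w)} with hC
  set C' := {e ∈ G.edgeSet | ∃ u ∈ s0, ∃ w ∈ insert x s1, e = s(u, w)} with hC'
  set M := {e ∈ G.edgeSet | (∃ u ∈ s0, ∃ w ∈ s0, e = s(u, w)) ∨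
      (∃ u ∈ s1, ∃ w ∈ s1, e = s(u, w))} with hM
  set M' := {e ∈ G.edgeSet | (∃ u ∈ s0, ∃ w ∈ s0, e = s(u, w)) ∨
      (∃ u ∈ insert x s1, ∃ w ∈ insert x s1, e = s(u, w))} with hM'
  have hCC : C ⊆ C' := by
    rintro e ⟨he, u, hu, w, hw, rfl⟩
    exact ⟨he, u, hu, w, Set.mem_insert_of_mem _ hw, rfl⟩
  have hC'I : C' ⊆ C ∪ I := by
    rintro e ⟨he, u, hu, w, hw, rfl⟩
    rcases hw with rfl | hw
    · exact Or.inr ⟨he, Sym2.mem_mk_right _ _⟩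
    · exact Or.inl ⟨he, u, hu, w, hw, rfl⟩
  have hMM : M ⊆ M' := by
    rintro e ⟨he, h | ⟨u, hu, w, hw, rfl⟩⟩
    · exact ⟨he, Or.inl h⟩
    · exact ⟨he, Or.inr ⟨u, Set.mem_insert_of_mem _ hu, w, Set.mem_insert_of_mem _ hw, rfl⟩⟩
  have hM'I : M' ⊆ M ∪ I := by
    rintro e ⟨he, h | ⟨u, hu, w, hw, rfl⟩⟩
    · exact Or.inl ⟨he, Or.inl h⟩
    · rcases hu with rfl | hu
      · exact Or.inr ⟨he, Sym2.mem_mk_left _ _⟩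
      · rcases hw with rfl | hw
        · exact Or.inr ⟨he, Sym2.mem_mk_right _ _⟩
        · exact Or.inl ⟨he, Or.inr ⟨u, hu, w, hw, rfl⟩⟩
  have f1 : C.ncard ≤ C'.ncard := Set.ncard_le_ncard hCC (Set.toFinite _)
  have f2 : C'.ncard ≤ C.ncard + I.ncard :=
    le_trans (Set.ncard_le_ncard hC'I (Set.toFinite _)) (Set.ncard_union_le _ _)
  have f3 : M.ncard ≤ M'.ncard := Set.ncard_le_ncard hMM (Set.toFinite _)
  have f4 : M'.ncard ≤ M.ncard + I.ncard :=
    le_trans (Set.ncard_le_ncard hM'I (Set.toFinite _)) (Set.ncard_union_le _ _)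
  have hIdeg : I.ncard = G.degree x := ncard_incidence G
  have hb : bscore G s0 (insert x s1) = (C'.ncard : ℤ) - (M'.ncard : ℤ) := rfl
  have hb' : bscore G s0 s1 = (C.ncard : ℤ) - (M.ncard : ℤ) := rfl
  rw [hb, hb', abs_le]
  constructor <;> [skip; skip] <;>
    · push_cast
      omega

lemma bscore_insert_left (x : V) (s0 s1 : Set V) :
    |bscore G (insert x s0) s1 - bscore G s0 s1| ≤ (G.degree x : ℤ) := by
  rw [bscore_comm G (insert x s0) s1, bscore_comm G s0 s1]
  exact bscore_insert_right G x s1 s0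

end Graph

section Transfer
variable {V : Type*} [Fintype V] [DecidableEq V] (G : SimpleGraph V) [DecidableRel G.Adj] (v : V)

abbrev Vm (v : V) : Set V := {w | w ≠ v}

noncomputable abbrev emb (v : V) : ↥(BalAux.Vm v) ↪ V := Function.Embedding.subtype _

lemma img_lemma (s0 s1 : Set ↥(BalAux.Vm v)) :
    {e ∈ G.edgeSet | ∃ u ∈ Subtype.val '' s0, ∃ w ∈ Subtype.val '' s1, e = s(u, w)} =
      Sym2.map Subtype.val ''
        {e ∈ (G.induce (BalAux.Vm v)).edgeSet | ∃ u ∈ s0, ∃ w ∈ s1, e = s(u, w)} := by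
  ext e
  simp only [Set.mem_setOf_eq, Set.mem_image]
  constructor
  · rintro ⟨he, u, ⟨a, ha, rfl⟩, w, ⟨b, hb, rfl⟩, rfl⟩
    refine ⟨s(a, b), ⟨?_, a, ha, b, hb, rfl⟩, Sym2.map_pair_eq _ _ _⟩
    rw [SimpleGraph.mem_edgeSet] at he ⊢
    exact he
  · rintro ⟨e', ⟨he', a, ha, b, hb, rfl⟩, rfl⟩
    rw [SimpleGraph.mem_edgeSet] at he'
    refine ⟨?_, ↑a, ⟨a, ha, rfl⟩, ↑b, ⟨b, hb, rfl⟩, (Sym2.map_pair_eq _ _ _)⟩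
    rw [Sym2.map_pair_eq, SimpleGraph.mem_edgeSet]
    exact he'

lemma bscore_map (s0 s1 : Set ↥(BalAux.Vm v)) :
    bscore (G.induce (BalAux.Vm v)) s0 s1 = bscore G (Subtype.val '' s0) (Subtype.val '' s1) := by
  have hinj : Function.Injective (Sym2.map (Subtype.val : ↥(BalAux.Vm v) → V)) :=
    Sym2.map.injective Subtype.val_injective
  have h1 := img_lemma G v s0 s1
  have h2 : {e ∈ G.edgeSet | (∃ u ∈ Subtype.val '' s0, ∃ w ∈ Subtype.val '' s0, e = s(u, w)) ∨
        (∃ u ∈ Subtype.val '' s1, ∃ w ∈ Subtype.val '' s1, e = s(u, w))} =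
      Sym2.map Subtype.val ''
        {e ∈ (G.induce (BalAux.Vm v)).edgeSet | (∃ u ∈ s0, ∃ w ∈ s0, e = s(u, w)) ∨
          (∃ u ∈ s1, ∃ w ∈ s1, e = s(u, w))} := by
    have e1 : {e ∈ G.edgeSet | (∃ u ∈ Subtype.val '' s0, ∃ w ∈ Subtype.val '' s0, e = s(u, w)) ∨
          (∃ u ∈ Subtype.val '' s1, ∃ w ∈ Subtype.val '' s1, e = s(u, w))} =
        {e ∈ G.edgeSet | ∃ u ∈ Subtype.val '' s0, ∃ w ∈ Subtype.val '' s0, e = s(u, w)} ∪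
        {e ∈ G.edgeSet | ∃ u ∈ Subtype.val '' s1, ∃ w ∈ Subtype.val '' s1, e = s(u, w)} := by
      ext e
      simp only [Set.mem_setOf_eq, Set.mem_union]
      constructor
      · rintro ⟨he, h | h⟩
        · exact Or.inl ⟨he, h⟩
        · exact Or.inr ⟨he, h⟩
      · rintro (⟨he, h⟩ | ⟨he, h⟩)
        · exact ⟨he, Or.inl h⟩
        · exact ⟨he, Or.inr h⟩
    have e2 : {e ∈ (G.induce (BalAux.Vm v)).edgeSet | (∃ u ∈ s0, ∃ w ∈ s0, e = s(u, w)) ∨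
          (∃ u ∈ s1, ∃ w ∈ s1, e = s(u, w))} =
        {e ∈ (G.induce (BalAux.Vm v)).edgeSet | ∃ u ∈ s0, ∃ w ∈ s0, e = s(u, w)} ∪
        {e ∈ (G.induce (BalAux.Vm v)).edgeSet | ∃ u ∈ s1, ∃ w ∈ s1, e = s(u, w)} := by
      ext e
      simp only [Set.mem_setOf_eq, Set.mem_union]
      constructor
      · rintro ⟨he, h | h⟩
        · exact Or.inl ⟨he, h⟩
        · exact Or.inr ⟨he, h⟩
      · rintro (⟨he, h⟩ | ⟨he, h⟩)
        · exact ⟨he, Or.inl h⟩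
        · exact ⟨he, Or.inr h⟩
    rw [e1, e2, Set.image_union, img_lemma G v s0 s0, img_lemma G v s1 s1]
  unfold bscore
  rw [h1, h2, Set.ncard_image_of_injective _ hinj, Set.ncard_image_of_injective _ hinj]

lemma univ_map_emb : (Finset.univ : Finset ↥(BalAux.Vm v)).map (emb v) = Finset.univ.erase v := by
  ext a
  simp only [Finset.mem_map, Finset.mem_univ, true_and, Finset.mem_erase, and_true,
    Function.Embedding.coe_subtype]
  constructor
  · rintro ⟨b, rfl⟩
    exact b.2
  · intro ha
    exact ⟨⟨a, ha⟩, rfl⟩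

lemma transfer :
    ∀ (k : ℕ) (t : Bool) (A0 A1 : Finset ↥(BalAux.Vm v)),
      gameVal (G.induce (BalAux.Vm v)) k t A0 A1 =
        BalAux.gGame (fun A B => bscore G ↑A ↑B) (Finset.univ.erase v) k t
          (A0.map (emb v)) (A1.map (emb v)) := by
  have hbs : ∀ (B0 B1 : Finset ↥(BalAux.Vm v)),
      bscore (G.induce (BalAux.Vm v)) ↑B0 ↑B1 = bscore G ↑(B0.map (emb v)) ↑(B1.map (emb v)) := by
    intro B0 B1
    rw [Finset.coe_map, Finset.coe_map]
    exact bscore_map G v ↑B0 ↑B1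
  intro k
  induction k with
  | zero => exact fun t A0 A1 => hbs A0 A1
  | succ k ih =>
    intro t A0 A1
    have hset : Finset.univ.erase v \ (A0.map (emb v) ∪ A1.map (emb v)) =
        ((Finset.univ \ (A0 ∪ A1)).map (emb v)) := by
      rw [← Finset.map_union, ← univ_map_emb v]
      ext a
      simp only [Finset.mem_sdiff, Finset.mem_map, Finset.mem_univ, true_and]
      constructor
      · rintro ⟨⟨b, rfl⟩, hn⟩
        exact ⟨b, ⟨fun hb => hn ⟨b, hb, rfl⟩, rfl⟩⟩
      · rintro ⟨b, ⟨hb, rfl⟩⟩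
        exact ⟨⟨b, rfl⟩, fun ⟨b', hb', he⟩ => hb (by
          rwa [(emb v).injective he] at hb')⟩
    rw [BalAux.gameVal_succ, BalAux.gGame_succ, hset]
    by_cases hne : (Finset.univ \ (A0 ∪ A1) : Finset ↥(BalAux.Vm v)).Nonempty
    · have hne' : ((Finset.univ \ (A0 ∪ A1)).map (emb v)).Nonempty :=
        Finset.map_nonempty.mpr hne
      rw [dif_pos hne, dif_pos hne']
      cases t with
      | true =>
        simp only [if_true]
        rw [Finset.inf'_map]
        apply Finset.inf'_congr hne rfl
        intro a _
        show gameVal (G.induce (BalAux.Vm v)) k false (insert a A0) A1 = _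
        rw [ih false (insert a A0) A1, Finset.map_insert]
        rfl
      | false =>
        simp only [Bool.false_eq_true, if_false]
        rw [Finset.sup'_map]
        apply Finset.sup'_congr hne rfl
        intro a _
        show gameVal (G.induce (BalAux.Vm v)) k true A0 (insert a A1) = _
        rw [ih true A0 (insert a A1), Finset.map_insert]
        rfl
    · rw [dif_neg hne, dif_neg (by rwa [Finset.map_nonempty])]
      exact hbs A0 A1

end Transfer

end BalAux

theorem statement_8 {V : Type*} [Fintype V] [DecidableEq V] (G : SimpleGraph V)
    [DecidableRel G.Adj] (v : V) :
    balI G ≤ balA (G.induce {w | w ≠ v}) + 2 * (G.maxDegree : ℤ) + (G.degree v : ℤ) ∧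
    balI (G.induce {w | w ≠ v}) - 2 * (G.maxDegree : ℤ) - (G.degree v : ℤ) ≤ balA G := by
  classical
  obtain ⟨m, hm⟩ : ∃ m, Fintype.card V = m + 1 := by
    have : 0 < Fintype.card V := Fintype.card_pos_iff.mpr ⟨v⟩
    exact ⟨Fintype.card V - 1, by omega⟩
  set f : Finset V → Finset V → ℤ := fun A B => bscore G ↑A ↑B with hf
  set c1 : ℤ := (G.degree v : ℤ) with hc1def
  set c2 : ℤ := (G.maxDegree : ℤ) with hc2def
  have hc1 : 0 ≤ c1 := Int.natCast_nonneg _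
  have hc2 : 0 ≤ c2 := Int.natCast_nonneg _
  have Hx0 : ∀ (x : V) (S0 S1 : Finset V), |f (insert x S0) S1 - f S0 S1| ≤ c2 := by
    intro x S0 S1
    show |bscore G ↑(insert x S0) ↑S1 - bscore G ↑S0 ↑S1| ≤ c2
    rw [Finset.coe_insert]
    refine le_trans (BalAux.bscore_insert_left G x ↑S0 ↑S1) ?_
    exact_mod_cast Nat.cast_le.mpr (G.degree_le_maxDegree x)
  have Hx1 : ∀ (x : V) (S0 S1 : Finset V), |f S0 (insert x S1) - f S0 S1| ≤ c2 := by
    intro x S0 S1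
    show |bscore G ↑S0 ↑(insert x S1) - bscore G ↑S0 ↑S1| ≤ c2
    rw [Finset.coe_insert]
    refine le_trans (BalAux.bscore_insert_right G x ↑S0 ↑S1) ?_
    exact_mod_cast Nat.cast_le.mpr (G.degree_le_maxDegree x)
  have Hv0 : ∀ (S0 S1 : Finset V), |f (insert v S0) S1 - f S0 S1| ≤ c1 := by
    intro S0 S1
    show |bscore G ↑(insert v S0) ↑S1 - bscore G ↑S0 ↑S1| ≤ c1
    rw [Finset.coe_insert]
    exact BalAux.bscore_insert_left G v ↑S0 ↑S1
  have Hv1 : ∀ (S0 S1 : Finset V), |f S0 (insert v S1) - f S0 S1| ≤ c1 := by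
    intro S0 S1
    show |bscore G ↑S0 ↑(insert v S1) - bscore G ↑S0 ↑S1| ≤ c1
    rw [Finset.coe_insert]
    exact BalAux.bscore_insert_right G v ↑S0 ↑S1
  -- the dual score function
  set g : Finset V → Finset V → ℤ := fun A B => -f B A with hg
  have Hx0' : ∀ (x : V) (S0 S1 : Finset V), |g (insert x S0) S1 - g S0 S1| ≤ c2 := by
    intro x S0 S1
    have h : g (insert x S0) S1 - g S0 S1 = -(f S1 (insert x S0) - f S1 S0) := by
      simp only [hg]; ring
    rw [h, abs_neg]
    exact Hx1 x S1 S0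
  have Hx1' : ∀ (x : V) (S0 S1 : Finset V), |g S0 (insert x S1) - g S0 S1| ≤ c2 := by
    intro x S0 S1
    have h : g S0 (insert x S1) - g S0 S1 = -(f (insert x S1) S0 - f S1 S0) := by
      simp only [hg]; ring
    rw [h, abs_neg]
    exact Hx0 x S1 S0
  have Hv0' : ∀ (S0 S1 : Finset V), |g (insert v S0) S1 - g S0 S1| ≤ c1 := by
    intro S0 S1
    have h : g (insert v S0) S1 - g S0 S1 = -(f S1 (insert v S0) - f S1 S0) := by
      simp only [hg]; ring
    rw [h, abs_neg]
    exact Hv1 S1 S0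
  have Hv1' : ∀ (S0 S1 : Finset V), |g S0 (insert v S1) - g S0 S1| ≤ c1 := by
    intro S0 S1
    have h : g S0 (insert v S1) - g S0 S1 = -(f (insert v S1) S0 - f S1 S0) := by
      simp only [hg]; ring
    rw [h, abs_neg]
    exact Hv0 S1 S0
  -- cardinality of the punctured vertex set
  have hcard : Fintype.card ↥(BalAux.Vm v) = m := by
    have h1 : (Finset.univ : Finset ↥(BalAux.Vm v)).card = (Finset.univ.erase v).card := by
      rw [← BalAux.univ_map_emb (v := v), Finset.card_map]
    rw [← Finset.card_univ, h1, Finset.card_erase_of_mem (Finset.mem_univ v),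
      Finset.card_univ, hm]
    omega
  -- identify the four game values
  have hbalI : balI G = BalAux.gGame f Finset.univ (m + 1) false ∅ ∅ := by
    rw [balI, BalAux.gameVal_eq_gGame, hm]
  have hbalA : balA G = BalAux.gGame f Finset.univ (m + 1) true ∅ ∅ := by
    rw [balA, BalAux.gameVal_eq_gGame, hm]
  have hbalA' : balA (G.induce (BalAux.Vm v)) =
      BalAux.gGame f (Finset.univ.erase v) m true ∅ ∅ := by
    rw [balA, BalAux.transfer G v (Fintype.card ↥(BalAux.Vm v)) true ∅ ∅, hcard,
      Finset.map_empty]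
  have hbalI' : balI (G.induce (BalAux.Vm v)) =
      BalAux.gGame f (Finset.univ.erase v) m false ∅ ∅ := by
    rw [balI, BalAux.transfer G v (Fintype.card ↥(BalAux.Vm v)) false ∅ ∅, hcard,
      Finset.map_empty]
  constructor
  · -- first inequality
    have main := BalAux.lemMAIN f v c1 c2 hc1 hc2 Hv0 Hv1 Hx0 Hx1 m
    rw [← hbalI, ← hbalA'] at main
    linarith
  · -- second inequality, via the dual game
    have main := BalAux.lemMAIN g v c1 c2 hc1 hc2 Hv0' Hv1' Hx0' Hx1' m
    have d1 := BalAux.lemDUAL f Finset.univ (m + 1) false (∅ : Finset V) ∅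
    have d2 := BalAux.lemDUAL f (Finset.univ.erase v) m true (∅ : Finset V) ∅
    rw [d1, d2] at main
    simp only [Bool.not_false, Bool.not_true] at main
    rw [← hbalA, ← hbalI'] at main
    linarith
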